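/- Limit of the optimal variance as the weight variance grows (Lemma 4(ii), limit part): Fix a ≥ 0 and b > 0 with a + b > 0, and for each v > 0 let x_min(v) denote the unique minimizer of f_v(x) = (a + b/x)((v+1)e^x − 1) on (0, ∞). Then x_min(v) → x_opt as v → ∞, where x_opt is the unique minimizer on (0, ∞) of CT*(x) = e^x (a + b/x); explicitly, x_opt = (−b + √(b² + 4ab))/(2a) if a > 0 and x_opt = 1 if a = 0. -/

import Mathlib

open Set Filter

set_option maxHeartbeats 1000000

/-- **Limit of the optimal variance as the weight variance grows** (Lemma 4(ii), limit
part).  Fix `a ≥ 0` and `b > 0` with `a + b > 0`, and for each `v > 0` let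
`xmin v ∈ (0, ∞)` be the (unique, by Lemma 4(i)) minimizer of
`f_v(x) = (a + b/x)((v+1)e^x − 1)` on `(0, ∞)`.  Then `xmin v → x_opt` as `v → ∞`, where
`x_opt` — explicitly equal to `(−b + √(b² + 4ab))/(2a)` if `a > 0` and to `1` if `a = 0` —
is the unique minimizer on `(0, ∞)` of `CT*(x) = e^x (a + b/x)`. -/
theorem optimal_variance_limit
    (a b : ℝ) (ha : 0 ≤ a) (hb : 0 < b) (hab : 0 < a + b)
    (xmin : ℝ → ℝ)
    (hxmin : ∀ v, 0 < v → xmin v ∈ Ioi (0 : ℝ) ∧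
      IsMinOn (fun x => (a + b / x) * ((v + 1) * Real.exp x - 1)) (Ioi (0 : ℝ)) (xmin v))
    (xopt : ℝ)
    (hxopt : xopt = if a = 0 then 1 else (-b + Real.sqrt (b ^ 2 + 4 * a * b)) / (2 * a)) :
    (xopt ∈ Ioi (0 : ℝ) ∧
      ∀ x ∈ Ioi (0 : ℝ), x ≠ xopt →
        Real.exp xopt * (a + b / xopt) < Real.exp x * (a + b / x)) ∧
    Tendsto xmin atTop (nhds xopt) := by
  set g : ℝ → ℝ := fun x => Real.exp x * (a + b / x) with hgdef
  have hxopt_pos : 0 < xopt := by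
    rcases eq_or_lt_of_le ha with h0 | h0
    · rw [hxopt, if_pos h0.symm]; norm_num
    · rw [hxopt, if_neg h0.ne']
      have hs : b < Real.sqrt (b ^ 2 + 4 * a * b) := by
        have h1 : b = Real.sqrt (b ^ 2) := by rw [Real.sqrt_sq hb.le]
        nth_rewrite 1 [h1]
        exact Real.sqrt_lt_sqrt (by positivity) (by nlinarith)
      exact div_pos (by linarith) (by linarith)
  have hq0 : a * xopt ^ 2 + b * xopt - b = 0 := by
    rcases eq_or_lt_of_le ha with h0 | h0
    · rw [hxopt, if_pos h0.symm, ← h0]; ring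
    · have hs : Real.sqrt (b ^ 2 + 4 * a * b) ^ 2 = b ^ 2 + 4 * a * b :=
        Real.sq_sqrt (by positivity)
      rw [hxopt, if_neg h0.ne']
      field_simp
      nlinarith [hs, Real.sq_sqrt (show (0:ℝ) ≤ b * (b + a * 4) by positivity)]
  -- derivative of g
  have hderiv : ∀ x : ℝ, 0 < x →
      HasDerivAt g (Real.exp x * ((a * x ^ 2 + b * x - b) / x ^ 2)) x := by
    intro x hx
    have h1 : HasDerivAt (fun y : ℝ => a + b / y)
        ((0 * x - b * 1) / x ^ 2) x :=
      ((hasDerivAt_const x b).div (hasDerivAt_id x) hx.ne').const_add a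
    have h2 := (Real.hasDerivAt_exp x).mul h1
    refine h2.congr_deriv ?_
    field_simp [hx.ne']
    ring
  -- sign of q
  have hq_neg : ∀ x : ℝ, 0 < x → x < xopt → a * x ^ 2 + b * x - b < 0 := by
    intro x hx hlt
    have hpos : 0 < a * (x + xopt) + b := by
      have : 0 ≤ a * (x + xopt) := mul_nonneg ha (by linarith)
      linarith
    nlinarith [mul_pos (sub_pos.2 hlt) hpos]
  have hq_pos : ∀ x : ℝ, xopt < x → 0 < a * x ^ 2 + b * x - b := by
    intro x hlt
    have hpos : 0 < a * (x + xopt) + b := by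
      have : 0 ≤ a * (x + xopt) := mul_nonneg ha (by linarith)
      linarith
    nlinarith [mul_pos (sub_pos.2 hlt) hpos]
  have hcont : ∀ s : Set ℝ, (∀ x ∈ s, x ≠ 0) → ContinuousOn g s := by
    intro s hs
    exact Real.continuous_exp.continuousOn.mul
      (continuousOn_const.add (continuousOn_const.div continuousOn_id hs))
  have hanti : StrictAntiOn g (Ioc 0 xopt) := by
    apply strictAntiOn_of_deriv_neg (convex_Ioc 0 xopt)
      (hcont _ fun x hx => ne_of_gt hx.1)
    intro x hx
    rw [interior_Ioc] at hx
    rw [(hderiv x hx.1).deriv]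
    have hq := hq_neg x hx.1 hx.2
    have : (a * x ^ 2 + b * x - b) / x ^ 2 < 0 := div_neg_of_neg_of_pos hq (pow_pos hx.1 2)
    exact mul_neg_of_pos_of_neg (Real.exp_pos x) this
  have hmono : StrictMonoOn g (Ici xopt) := by
    apply strictMonoOn_of_deriv_pos (convex_Ici xopt)
      (hcont _ fun x hx => by exact ne_of_gt (lt_of_lt_of_le hxopt_pos hx))
    intro x hx
    rw [interior_Ici] at hx
    rw [(hderiv x (lt_trans hxopt_pos hx)).deriv]
    have hq := hq_pos x hx
    have : 0 < (a * x ^ 2 + b * x - b) / x ^ 2 :=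
      div_pos hq (pow_pos (lt_trans hxopt_pos hx) 2)
    exact mul_pos (Real.exp_pos x) this
  have part1 : ∀ x ∈ Ioi (0 : ℝ), x ≠ xopt → g xopt < g x := by
    intro x hx hne
    rcases lt_or_gt_of_ne hne with h | h
    · exact hanti ⟨hx, h.le⟩ ⟨hxopt_pos, le_rfl⟩ h
    · exact hmono self_mem_Ici (le_of_lt h) h
  refine ⟨⟨mem_Ioi.2 hxopt_pos, part1⟩, ?_⟩
  -- Part 2: the limit
  set h : ℝ → ℝ := fun x => a + b / x with hhdef
  have hh_pos : ∀ x : ℝ, 0 < x → 0 < h x := by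
    intro x hx
    have : 0 < b / x := div_pos hb hx
    simp only [hhdef]; linarith
  have key : ∀ v : ℝ, 0 < v →
      (v + 1) * (g (xmin v) - g xopt) ≤ h (xmin v) - h xopt := by
    intro v hv
    have h1 := isMinOn_iff.mp (hxmin v hv).2 xopt (mem_Ioi.2 hxopt_pos)
    have e : ∀ x : ℝ, (a + b / x) * ((v + 1) * Real.exp x - 1)
        = (v + 1) * g x - h x := by
      intro x; simp only [hgdef, hhdef]; ring
    rw [e, e] at h1
    linarith
  have gm_lb : ∀ m : ℝ, 0 < m → h m + b ≤ g m := by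
    intro m hm
    have h1 : m + 1 ≤ Real.exp m := Real.add_one_le_exp m
    have h3 : 0 < h m := hh_pos m hm
    have h4 : (m + 1) * h m ≤ Real.exp m * h m :=
      mul_le_mul_of_nonneg_right h1 h3.le
    have h5 : m * h m = m * a + b := by
      simp only [hhdef]
      field_simp
    have h6 : 0 ≤ m * a := mul_nonneg hm.le ha
    have h7 : (m + 1) * h m = m * h m + h m := by ring
    have hgm : g m = Real.exp m * h m := rfl
    rw [hgm]
    linarith
  set C : ℝ := 2 * |g xopt - b| + 1 with hCdef
  have hCpos : 0 < C := by positivity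
  set m₀ : ℝ := b / C with hm₀def
  have hm₀pos : 0 < m₀ := div_pos hb hCpos
  have hm_lb : ∀ v : ℝ, 1 ≤ v → m₀ ≤ xmin v := by
    intro v hv1
    have hvpos : 0 < v := lt_of_lt_of_le one_pos hv1
    have hm : 0 < xmin v := (hxmin v hvpos).1
    have k := key v hvpos
    have g1 := gm_lb (xmin v) hm
    have hpo := hh_pos xopt hxopt_pos
    have habs : g xopt - b ≤ |g xopt - b| := le_abs_self _
    have habs0 : 0 ≤ |g xopt - b| := abs_nonneg _
    have h5 : v * h (xmin v) ≤ (v + 1) * (g xopt - b) := by nlinarith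
    have h6 : h (xmin v) ≤ C := by nlinarith [hh_pos (xmin v) hm]
    have h7 : b / xmin v ≤ C := by
      have h8 : b / xmin v ≤ h (xmin v) := by simp only [hhdef]; linarith
      exact h8.trans h6
    rw [hm₀def, div_le_iff₀ hCpos]
    rw [div_le_iff₀ hm] at h7
    linarith
  rw [Metric.tendsto_atTop]
  intro ε hε
  set ε' : ℝ := min ε xopt / 2 with hε'def
  have hε'pos : 0 < ε' := by
    have : 0 < min ε xopt := lt_min hε hxopt_pos
    positivity
  have hε'lt : ε' < ε := by
    have h1 : min ε xopt ≤ ε := min_le_left _ _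
    rw [hε'def]; linarith
  have hε'xopt : 0 < xopt - ε' := by
    have h1 : min ε xopt ≤ xopt := min_le_right _ _
    rw [hε'def] at *; linarith
  have hδ₁ : g xopt < g (xopt - ε') :=
    hanti ⟨hε'xopt, by linarith⟩ ⟨hxopt_pos, le_rfl⟩ (by linarith)
  have hδ₂ : g xopt < g (xopt + ε') :=
    hmono self_mem_Ici (by simp only [mem_Ici]; linarith) (by linarith)
  set δ : ℝ := min (g (xopt - ε') - g xopt) (g (xopt + ε') - g xopt) with hδdef
  have hδpos : 0 < δ := lt_min (by linarith) (by linarith)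
  refine ⟨max 1 ((a + b / m₀ + δ) / δ), fun v hv => ?_⟩
  have hv1 : 1 ≤ v := le_trans (le_max_left _ _) hv
  have hvpos : 0 < v := lt_of_lt_of_le one_pos hv1
  have hv2 : a + b / m₀ + δ ≤ v * δ := by
    have h1 := le_trans (le_max_right _ _) hv
    rwa [div_le_iff₀ hδpos] at h1
  have hm_pos : 0 < xmin v := (hxmin v hvpos).1
  have hmlb := hm_lb v hv1
  have k := key v hvpos
  rw [Real.dist_eq]
  by_contra hcon
  push_neg at hcon
  have hcon' : ε' ≤ |xmin v - xopt| := le_trans hε'lt.le hcon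
  have hhub : h (xmin v) ≤ a + b / m₀ := by
    have : b / xmin v ≤ b / m₀ := by
      apply div_le_div_of_nonneg_left hb.le hm₀pos hmlb
    simp only [hhdef]; linarith
  have hgap : g xopt + δ ≤ g (xmin v) := by
    rcases abs_cases (xmin v - xopt) with ⟨he, _⟩ | ⟨he, _⟩
    · -- xmin v ≥ xopt + ε'
      have hge : xopt + ε' ≤ xmin v := by rw [he] at hcon'; linarith
      have := hmono.monotoneOn (by simp only [mem_Ici]; linarith : xopt + ε' ∈ Ici xopt)
        (by simp only [mem_Ici]; linarith : xmin v ∈ Ici xopt) hge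
      have hd : δ ≤ g (xopt + ε') - g xopt := min_le_right _ _
      linarith
    · -- xmin v ≤ xopt - ε'
      have hle : xmin v ≤ xopt - ε' := by rw [he] at hcon'; linarith
      have := hanti.antitoneOn
        (⟨hm_pos, by linarith⟩ : xmin v ∈ Ioc 0 xopt)
        (⟨hε'xopt, by linarith⟩ : xopt - ε' ∈ Ioc 0 xopt) hle
      have hd : δ ≤ g (xopt - ε') - g xopt := min_le_left _ _
      linarith
  have hpo := hh_pos xopt hxopt_pos
  have h8 : (v + 1) * δ ≤ (v + 1) * (g (xmin v) - g xopt) :=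
    mul_le_mul_of_nonneg_left (by linarith) (by linarith)
  have h9 : (v + 1) * δ = v * δ + δ := by ring
  have h10 : (v + 1) * δ ≤ h (xmin v) - h xopt := h8.trans k
  clear_value g h C m₀ ε' δ
  linarith
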